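/- Let 𝒢 = 𝒢_1 ∪ ⋯ ∪ 𝒢_l, where for each 1 ≤ i ≤ l the graph 𝒢_i has m_i connected components, each of which is a cycle of odd length k_i = 2γ_i+1. Then the regularity index of I(X*_𝒢) equals Σ_{i=1}^{l} ( m_i(k_i+γ_i)(q−1)/2 − k_i m_i ); that is, the least integer p ≥ 0 such that the affine Hilbert function satisfies H_{X*_𝒢}(d) = |X*_𝒢| for all d ≥ p is p = Σ_{i=1}^{l} ( m_i(k_i+γ_i)(q−1)/2 − k_i m_i ). -/

import Mathlib

open MvPolynomial

/-- The affine algebraic toric set parameterized by the disjoint union `𝒢 = 𝒢₁ ∪ ⋯ ∪ 𝒢_l`,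
where `𝒢_i` is the disjoint union of `mf i` cycles of length `kf i`. The coordinates (one for
each edge of `𝒢`) are indexed by triples `⟨i, j, c⟩` (the `c`-th edge of the `j`-th cycle of
`𝒢_i`), the coordinate at `⟨i, j, c⟩` being `x ⟨i, j, c⟩ * x ⟨i, j, c+1⟩` with the edge index
taken cyclically in its cycle. -/
def unionCyclesToricSet (K : Type) [Field K] (l : ℕ) (kf mf : Fin l → ℕ) :
    Set ((i : Fin l) × (Fin (mf i) × Fin (kf i)) → K) :=
  {y | ∃ x : (i : Fin l) × (Fin (mf i) × Fin (kf i)) → K, (∀ p, x p ≠ 0) ∧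
    ∀ p : (i : Fin l) × (Fin (mf i) × Fin (kf i)),
      y p = x p * x ⟨p.1, (p.2.1, finRotate (kf p.1) p.2.2)⟩}

/-- The affine Hilbert function of a set `X ⊆ K^σ`:
`H_X(d) = dim_K S_{≤d} / I(X)_{≤d}`, where `S_{≤d}` is the space of polynomials of total
degree at most `d` and `I(X)_{≤d} = I(X) ∩ S_{≤d}`. -/
noncomputable def affineHilbertFunction (K : Type) [Field K] {σ : Type} (X : Set (σ → K))
    (d : ℕ) : ℕ :=
  Module.finrank K
    (↥(MvPolynomial.restrictTotalDegree σ K d) ⧸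
      Submodule.comap (MvPolynomial.restrictTotalDegree σ K d).subtype
        (Submodule.restrictScalars K (MvPolynomial.vanishingIdeal K X)))

section general

variable {K : Type} [Field K] {σ : Type}

/-- Evaluation of polynomials as functions on `X`. -/
noncomputable def evalFuns (X : Set (σ → K)) : MvPolynomial σ K →ₗ[K] (X → K) where
  toFun f := fun x => eval (x : σ → K) f
  map_add' f g := by funext x; simp
  map_smul' c f := by funext x; simp [smul_eq_C_mul]

lemma ker_evalFuns (X : Set (σ → K)) :
    LinearMap.ker (evalFuns X) = Submodule.restrictScalars K (vanishingIdeal K X) := by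
  ext f
  simp [LinearMap.mem_ker, mem_vanishingIdeal_iff, _root_.funext_iff, evalFuns, Subtype.forall]

lemma affineHilbertFunction_eq_finrank_range (X : Set (σ → K)) (d : ℕ) :
    affineHilbertFunction K X d =
      Module.finrank K (LinearMap.range ((evalFuns X).comp
        (MvPolynomial.restrictTotalDegree σ K d).subtype)) := by
  rw [affineHilbertFunction, ← ker_evalFuns, ← LinearMap.ker_comp]
  exact LinearEquiv.finrank_eq ((evalFuns X).comp
    (MvPolynomial.restrictTotalDegree σ K d).subtype).quotKerEquivRange

lemma restrictTotalDegree_eq_span (d : ℕ) :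
    MvPolynomial.restrictTotalDegree σ K d =
      Submodule.span K ((fun a => monomial a (1:K)) '' {a : σ →₀ ℕ | (a.sum fun _ e => e) ≤ d}) := by
  rw [restrictTotalDegree, restrictSupport, AddMonoidAlgebra.supported_eq_span_single]
  congr 1

lemma range_eval_eq_span (X : Set (σ → K)) (d : ℕ) :
    LinearMap.range ((evalFuns X).comp (MvPolynomial.restrictTotalDegree σ K d).subtype)
      = Submodule.span K ((fun a => evalFuns X (monomial a (1:K))) ''
          {a : σ →₀ ℕ | (a.sum fun _ e => e) ≤ d}) := by
  rw [LinearMap.range_comp, Submodule.range_subtype, restrictTotalDegree_eq_span,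
    Submodule.map_span, Set.image_image]
end general

variable {K : Type} [Field K] {σ : Type}

lemma exists_indicator (X : Set (σ → K)) (hX : X.Finite) (x : σ → K) :
    ∃ f : MvPolynomial σ K, eval x f = 1 ∧ ∀ y ∈ X, y ≠ x → eval y f = 0 := by
  classical
  set g : (σ → K) → MvPolynomial σ K := fun y =>
    if h : ∃ p, x p ≠ y p then C (x h.choose - y h.choose)⁻¹ * (MvPolynomial.X h.choose - C (y h.choose))
    else 1 with hg
  have hgx : ∀ y, eval x (g y) = 1 := by
    intro y
    rw [hg]
    by_cases h : ∃ p, x p ≠ y p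
    · simp only [h, dif_pos]
      have := h.choose_spec
      simp [inv_mul_cancel₀ (sub_ne_zero.2 this)]
    · simp [h]
  have hgy : ∀ y, y ≠ x → eval y (g y) = 0 := by
    intro y hne
    have h : ∃ p, x p ≠ y p := by
      by_contra hc; push_neg at hc; exact hne (funext fun p => (hc p).symm)
    rw [hg]; simp [h]
  refine ⟨∏ y ∈ hX.toFinset.erase x, g y, ?_, ?_⟩
  · rw [map_prod]; exact Finset.prod_eq_one fun y _ => hgx y
  · intro y hy hne
    rw [map_prod]
    exact Finset.prod_eq_zero (Finset.mem_erase.2 ⟨hne, hX.mem_toFinset.2 hy⟩) (hgy y hne)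

lemma exists_range_evalFuns_top (X : Set (σ → K)) (hX : X.Finite) :
    ∃ d₀ : ℕ, ∀ d, d₀ ≤ d →
      LinearMap.range ((evalFuns X).comp (restrictTotalDegree σ K d).subtype) = ⊤ := by
  classical
  haveI : Fintype X := hX.fintype
  choose f hf1 hf0 using fun x : X => exists_indicator X hX x
  refine ⟨Finset.univ.sup fun x => (f x).totalDegree, fun d hd => ?_⟩
  rw [eq_top_iff]
  rintro φ -
  set F : MvPolynomial σ K := ∑ x : X, C (φ x) * f x with hF
  have hdeg : F.totalDegree ≤ d := by
    refine le_trans ((totalDegree_finset_sum _ _).trans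
      (Finset.sup_mono_fun fun x _ => le_trans (totalDegree_mul _ _) (by simp))) hd
  have hmem : F ∈ restrictTotalDegree σ K d := by
    rw [mem_restrictTotalDegree]; exact hdeg
  refine ⟨⟨F, hmem⟩, ?_⟩
  funext y
  show eval (y : σ → K) F = φ y
  rw [hF, map_sum]
  rw [Finset.sum_eq_single y]
  · simp [hf1 y]
  · intro x _ hxy
    have : (y : σ → K) ≠ (x : σ → K) := fun h => hxy (Subtype.ext h.symm)  -- careful direction
    simp [hf0 x y y.2 this]
  · simp

section zmod
variable {n r : ℕ} (hn : n = 2 * r) (hr : 1 ≤ r)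
include hn hr

lemma cast_val_add_r {x : ZMod n} : x + (r : ZMod n) = ((x.val + r : ℕ) : ZMod n) := by
  haveI : NeZero n := ⟨by omega⟩
  rw [Nat.cast_add, ZMod.natCast_val, ZMod.cast_id]

lemma val_add_r_of_ge {x : ZMod n} (hx : r ≤ x.val) : (x + (r : ZMod n)).val = x.val - r := by
  haveI : NeZero n := ⟨by omega⟩
  have hxlt : x.val < n := ZMod.val_lt x
  rw [cast_val_add_r hn hr, ZMod.val_natCast, Nat.mod_eq_sub_mod (by omega),
    Nat.mod_eq_of_lt (by omega)]
  omega

lemma val_add_r_of_lt {x : ZMod n} (hx : x.val < r) : (x + (r : ZMod n)).val = x.val + r := by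
  haveI : NeZero n := ⟨by omega⟩
  rw [cast_val_add_r hn hr, ZMod.val_natCast, Nat.mod_eq_of_lt (by omega)]

lemma two_eq_zero_iff {a : ZMod n} (h : a + a = 0) : a = 0 ∨ a = (r : ZMod n) := by
  haveI : NeZero n := ⟨by omega⟩
  have halt : a.val < n := ZMod.val_lt a
  have h2 : (a + a).val = 0 := by rw [h, ZMod.val_zero]
  rw [ZMod.val_add] at h2
  have hor : a.val = 0 ∨ a.val = r := by
    rcases Nat.lt_or_ge (a.val + a.val) n with hlt | hge
    · rw [Nat.mod_eq_of_lt hlt] at h2; omega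
    · rw [Nat.mod_eq_sub_mod hge, Nat.mod_eq_of_lt (by omega)] at h2; omega
  rcases hor with h0 | hrr
  · left; rw [← ZMod.natCast_rightInverse a, h0]; simp
  · right; rw [← ZMod.natCast_rightInverse a, hrr]
end zmod

section block
variable {n r : ℕ} (hn : n = 2 * r) (hr : 1 ≤ r)
include hn hr

omit hr in
lemma r_add_r : (r : ZMod n) + (r : ZMod n) = 0 := by
  rw [← Nat.cast_add, (show r + r = n by omega), ZMod.natCast_self]

omit hr in
lemma neg_r : -(r : ZMod n) = (r : ZMod n) :=
  neg_eq_of_add_eq_zero_right (r_add_r hn)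

lemma block_min_le {k γ : ℕ} (hk : k = 2 * γ + 1) (w : Fin k → ZMod n) :
    (∑ c, (w c).val ≤ (k + γ) * r - k) ∨
      (∑ c, (w c + (r : ZMod n)).val ≤ (k + γ) * r - k) := by
  classical
  haveI : NeZero n := ⟨by omega⟩
  set A : Finset (Fin k) := Finset.univ.filter (fun c => r ≤ (w c).val) with hA
  set j := A.card with hj
  set j' := Aᶜ.card with hj'
  have hjj' : j + j' = k := by
    rw [hj, hj', Finset.card_add_card_compl, Fintype.card_fin]
  have hsplit : ∀ (a b : ℕ), ∑ c, (if r ≤ (w c).val then a else b) = j * a + j' * b := by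
    intro a b
    rw [Finset.sum_ite, Finset.sum_const, Finset.sum_const, smul_eq_mul, smul_eq_mul, ← hA]
    congr 2
    rw [hj', ← Finset.compl_filter, hA]
  have hkr : (k + γ) * r = k * r + γ * r := by ring
  by_cases hcase : j ≤ γ
  · left
    have h1 : ∑ c, ((w c).val + 1) ≤ ∑ c, (if r ≤ (w c).val then 2 * r else r) := by
      apply Finset.sum_le_sum
      intro c _
      by_cases hc : r ≤ (w c).val
      · have := ZMod.val_lt (w c); simp only [hc, if_pos]; omega
      · simp only [hc, if_neg, not_false_iff]; omega
    rw [hsplit, Finset.sum_add_distrib, Finset.sum_const, Finset.card_univ, Fintype.card_fin,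
      smul_eq_mul, mul_one] at h1
    have e1 : j * (2 * r) + j' * r = (j + j') * r + j * r := by ring
    have e2 : j * r ≤ γ * r := Nat.mul_le_mul_right r hcase
    rw [e1, hjj'] at h1
    omega
  · right
    have hcase' : j' ≤ γ := by omega
    have h1 : ∑ c, ((w c + (r : ZMod n)).val + 1) ≤
        ∑ c, (if r ≤ (w c).val then r else 2 * r) := by
      apply Finset.sum_le_sum
      intro c _
      by_cases hc : r ≤ (w c).val
      · have := ZMod.val_lt (w c)
        rw [val_add_r_of_ge hn hr hc]
        simp only [hc, if_pos]; omega
      · have := ZMod.val_lt (w c + (r : ZMod n))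
        simp only [hc, if_neg, not_false_iff]; omega
    rw [hsplit, Finset.sum_add_distrib, Finset.sum_const, Finset.card_univ, Fintype.card_fin,
      smul_eq_mul, mul_one] at h1
    have e1 : j * r + j' * (2 * r) = (j + j') * r + j' * r := by ring
    have e2 : j' * r ≤ γ * r := Nat.mul_le_mul_right r hcase'
    rw [e1, hjj'] at h1
    omega
end block

section block2
variable {n r : ℕ} (hn : n = 2 * r) (hr : 1 ≤ r)
include hn hr

lemma sum_ite_fin {k γ : ℕ} (hγk : γ ≤ k) (a b : ℕ) :
    ∑ c : Fin k, (if (c : ℕ) < γ then a else b) = γ * a + (k - γ) * b := by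
  rw [Fin.sum_univ_eq_sum_range (fun m => if m < γ then a else b) k]
  rw [Finset.range_eq_Ico, ← Finset.sum_Ico_consecutive _ (Nat.zero_le γ) hγk]
  rw [Finset.sum_congr rfl (fun m hm => if_pos (Finset.mem_Ico.1 hm).2),
    Finset.sum_congr rfl (g := fun _ => b) (fun m hm => if_neg (by
      have := (Finset.mem_Ico.1 hm).1; omega))]
  simp [Nat.sub_zero, mul_comm]

def extremalBlock (r γ : ℕ) {k : ℕ} (_hk : k = 2 * γ + 1) : Fin k → ZMod n :=
  fun c => if (c : ℕ) < γ then ((2 * r - 1 : ℕ) : ZMod n) else ((r - 1 : ℕ) : ZMod n)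

lemma extremalBlock_sum {k γ : ℕ} (hk : k = 2 * γ + 1) :
    ∑ c, ((extremalBlock (n := n) r γ hk) c).val = (k + γ) * r - k := by
  haveI : NeZero n := ⟨by omega⟩
  have v1 : ((2 * r - 1 : ℕ) : ZMod n).val = 2 * r - 1 := ZMod.val_cast_of_lt (by omega)
  have v2 : ((r - 1 : ℕ) : ZMod n).val = r - 1 := ZMod.val_cast_of_lt (by omega)
  have : ∀ c : Fin k, ((extremalBlock (n := n) r γ hk) c).val
      = if (c : ℕ) < γ then 2 * r - 1 else r - 1 := by
    intro c; rw [extremalBlock]; split <;> [exact v1; exact v2]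
  rw [Finset.sum_congr rfl (fun c _ => this c), sum_ite_fin hn hr (by omega)]
  have h2 : k - γ = γ + 1 := by omega
  rw [h2]
  obtain ⟨r', rfl⟩ : ∃ r', r = r' + 1 := ⟨r - 1, by omega⟩
  have e1 : 2 * (r' + 1) - 1 = 2 * r' + 1 := by omega
  have e2 : r' + 1 - 1 = r' := by omega
  rw [e1, e2]
  have e3 : (k + γ) * (r' + 1) = (γ * (2 * r' + 1) + (γ + 1) * r') + k := by
    subst hk; ring
  omega

lemma extremalBlock_flip_sum {k γ : ℕ} (hk : k = 2 * γ + 1) :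
    ∑ c, ((extremalBlock (n := n) r γ hk) c + (r : ZMod n)).val = ((k + γ) * r - k) + r := by
  haveI : NeZero n := ⟨by omega⟩
  have v1 : ((2 * r - 1 : ℕ) : ZMod n).val = 2 * r - 1 := ZMod.val_cast_of_lt (by omega)
  have v2 : ((r - 1 : ℕ) : ZMod n).val = r - 1 := ZMod.val_cast_of_lt (by omega)
  have : ∀ c : Fin k, ((extremalBlock (n := n) r γ hk) c + (r : ZMod n)).val
      = if (c : ℕ) < γ then r - 1 else 2 * r - 1 := by
    intro c
    rw [extremalBlock]
    split
    · rw [val_add_r_of_ge hn hr (by omega), v1]; omega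
    · rw [val_add_r_of_lt hn hr (by omega), v2]; omega
  rw [Finset.sum_congr rfl (fun c _ => this c), sum_ite_fin hn hr (by omega)]
  have h2 : k - γ = γ + 1 := by omega
  rw [h2]
  obtain ⟨r', rfl⟩ : ∃ r', r = r' + 1 := ⟨r - 1, by omega⟩
  have e1 : 2 * (r' + 1) - 1 = 2 * r' + 1 := by omega
  have e2 : r' + 1 - 1 = r' := by omega
  rw [e1, e2]
  subst hk
  have hA : ((2 * γ + 1) + γ) * (r' + 1) = 3 * (γ * r') + 3 * γ + r' + 1 := by ring
  have hB : γ * r' + (γ + 1) * (2 * r' + 1) = 3 * (γ * r') + γ + 2 * r' + 1 := by ring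
  omega
end block2

section rot
open Fin.NatCast

lemma finRotate_iterate {N : ℕ} (m : ℕ) (c : Fin (N + 1)) :
    (finRotate (N + 1))^[m] c = c + (m : Fin (N + 1)) := by
  induction m with
  | zero => simp
  | succ m ih =>
      rw [Function.iterate_succ_apply', ih, finRotate_succ_apply, Nat.cast_add, Nat.cast_one,
        add_assoc]

lemma not_even_odd (γ : ℕ) : ¬ Even (2 * γ + 1) := by
  rw [Nat.even_iff]; omega

lemma block_alternating {n r γ : ℕ} (hn : n = 2 * r) (hr : 1 ≤ r) {k : ℕ} (hk : k = 2 * γ + 1)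
    (w : Fin k → ZMod n) (h : ∀ c, w (finRotate k c) = - w c) :
    (∀ c, w c = 0) ∨ (∀ c, w c = (r : ZMod n)) := by
  subst hk
  have iter : ∀ (m : ℕ) (c : Fin (2 * γ + 1)),
      w ((finRotate (2 * γ + 1))^[m] c) = if Even m then w c else - w c := by
    intro m
    induction m with
    | zero => intro c; simp
    | succ m ih =>
        intro c
        rw [Function.iterate_succ_apply', h, ih c]
        by_cases he : Even m
        · rw [if_pos he, if_neg (by simp [Nat.even_add_one, he])]
        · rw [if_neg he, if_pos (by simp [Nat.even_add_one, he]), neg_neg]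
  have key : ∀ c, w c = 0 ∨ w c = (r : ZMod n) := by
    intro c
    have h1 := iter (2 * γ + 1) c
    rw [finRotate_iterate, Fin.natCast_self, add_zero, if_neg (not_even_odd γ)] at h1
    exact two_eq_zero_iff hn hr (add_eq_zero_iff_eq_neg.mpr h1)
  have hconst : ∀ c, w (finRotate (2 * γ + 1) c) = w c := by
    intro c
    rw [h c]
    rcases key c with h0 | h1
    · rw [h0, neg_zero]
    · rw [h1, neg_r hn]
  have hall : ∀ c, w c = w 0 := by
    intro c
    have h2 : ∀ m : ℕ, w ((finRotate (2 * γ + 1))^[m] 0) = w 0 := by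
      intro m
      induction m with
      | zero => rfl
      | succ m ih => rw [Function.iterate_succ_apply', hconst, ih]
    have h3 := h2 c.val
    rwa [finRotate_iterate, zero_add, Fin.cast_val_eq_self] at h3
  rcases key 0 with h0 | h1
  · exact Or.inl fun c => (hall c).trans h0
  · exact Or.inr fun c => (hall c).trans h1

end rot

abbrev Idx (l : ℕ) (kf mf : Fin l → ℕ) : Type := (i : Fin l) × (Fin (mf i) × Fin (kf i))

variable (l : ℕ) (kf mf : Fin l → ℕ) (K : Type) [Field K]

def Xm : Submonoid (Idx l kf mf → K) where
  carrier := unionCyclesToricSet K l kf mf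
  one_mem' := ⟨fun _ => 1, fun _ => one_ne_zero, fun p => by simp⟩
  mul_mem' := by
    rintro a b ⟨x, hx, hxe⟩ ⟨y, hy, hye⟩
    exact ⟨x * y, fun p => mul_ne_zero (hx p) (hy p), fun p => by
      simp only [Pi.mul_apply, hxe p, hye p]; ring⟩

example : (Xm l kf mf K : Set (Idx l kf mf → K)) = unionCyclesToricSet K l kf mf := rfl

-- defeq test: a function on ↥(unionCyclesToricSet ...) given by a MonoidHom on ↥Xm
example (f : ↥(Xm l kf mf K) →* K) : ↥(unionCyclesToricSet K l kf mf) → K := ⇑f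

example (f g : ↥(Xm l kf mf K) →* K)
    (h : (⇑f : ↥(unionCyclesToricSet K l kf mf) → K) = ⇑g) : True := trivial


section chars
variable {l : ℕ} {kf mf : Fin l → ℕ} {K : Type} [Field K]

lemma mem_toric_ne_zero {y : Idx l kf mf → K} (hy : y ∈ unionCyclesToricSet K l kf mf) (p) :
    y p ≠ 0 := by
  obtain ⟨x, hx, hxe⟩ := hy
  rw [hxe p]; exact mul_ne_zero (hx p) (hx _)

/-- The character attached to a vector of exponents mod `n`. -/
def chi (n : ℕ) (v : Idx l kf mf → ZMod n) (x : Idx l kf mf → K) : K :=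
  ∏ p, x p ^ (v p).val

lemma chi_mul (n : ℕ) (v : Idx l kf mf → ZMod n) (x y : Idx l kf mf → K) :
    chi n v (x * y) = chi n v x * chi n v y := by
  simp [chi, mul_pow, Finset.prod_mul_distrib]

lemma chi_one (n : ℕ) (v : Idx l kf mf → ZMod n) : chi n v (1 : Idx l kf mf → K) = 1 := by
  simp [chi]

lemma pow_congr_mod {n : ℕ} (hpow : ∀ x : K, x ≠ 0 → x ^ n = 1) {x : K} (hx : x ≠ 0)
    {a b : ℕ} (hab : a % n = b % n) : x ^ a = x ^ b := by
  have key : ∀ c : ℕ, x ^ c = x ^ (c % n) := by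
    intro c
    conv_lhs => rw [← Nat.div_add_mod c n]
    rw [pow_add, pow_mul, hpow x hx, one_pow, one_mul]
  rw [key a, key b, hab]

lemma chi_add {n : ℕ} [NeZero n] (hpow : ∀ x : K, x ≠ 0 → x ^ n = 1)
    (v w : Idx l kf mf → ZMod n) (x : Idx l kf mf → K) (hx : ∀ p, x p ≠ 0) :
    chi n (v + w) x = chi n v x * chi n w x := by
  rw [chi, chi, chi, ← Finset.prod_mul_distrib]
  refine Finset.prod_congr rfl fun p _ => ?_
  rw [← pow_add]
  refine pow_congr_mod hpow (hx p) ?_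
  rw [Pi.add_apply, ZMod.val_add, Nat.mod_mod_of_dvd _ dvd_rfl]

lemma chi_ne_zero {n : ℕ} (v : Idx l kf mf → ZMod n) (x : Idx l kf mf → K)
    (hx : ∀ p, x p ≠ 0) : chi n v x ≠ 0 :=
  Finset.prod_ne_zero_iff.2 fun p _ => pow_ne_zero _ (hx p)

lemma prod_idx (M : Type) [CommMonoid M] (f : Idx l kf mf → M) :
    ∏ p : Idx l kf mf, f p = ∏ i : Fin l, ∏ j : Fin (mf i), ∏ c : Fin (kf i), f ⟨i, (j, c)⟩ := by
  rw [← Finset.univ_sigma_univ, Finset.prod_sigma]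
  exact Finset.prod_congr rfl fun i _ => Fintype.prod_prod_type _

/-- The lattice of exponent relations. -/
def Lam (l : ℕ) (kf mf : Fin l → ℕ) (n r : ℕ) (hn : n = 2 * r) :
    AddSubgroup (Idx l kf mf → ZMod n) where
  carrier := {v | ∀ (i : Fin l) (j : Fin (mf i)),
    (∀ c, v ⟨i, (j, c)⟩ = 0) ∨ (∀ c, v ⟨i, (j, c)⟩ = (r : ZMod n))}
  zero_mem' := fun i j => Or.inl fun c => rfl
  add_mem' := by
    intro a b ha hb i j
    rcases ha i j with h1 | h1 <;> rcases hb i j with h2 | h2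
    · exact Or.inl fun c => by rw [Pi.add_apply, h1 c, h2 c, add_zero]
    · exact Or.inr fun c => by rw [Pi.add_apply, h1 c, h2 c, zero_add]
    · exact Or.inr fun c => by rw [Pi.add_apply, h1 c, h2 c, add_zero]
    · exact Or.inl fun c => by rw [Pi.add_apply, h1 c, h2 c, r_add_r hn]
  neg_mem' := by
    intro a ha i j
    rcases ha i j with h1 | h1
    · exact Or.inl fun c => by rw [Pi.neg_apply, h1 c, neg_zero]
    · exact Or.inr fun c => by rw [Pi.neg_apply, h1 c, neg_r hn]

lemma chi_lam {n r : ℕ} (hn : n = 2 * r) (hr : 1 ≤ r)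
    (hpow : ∀ x : K, x ≠ 0 → x ^ n = 1)
    {v : Idx l kf mf → ZMod n} (hv : v ∈ Lam l kf mf n r hn)
    {y : Idx l kf mf → K} (hy : y ∈ unionCyclesToricSet K l kf mf) :
    chi n v y = 1 := by
  obtain ⟨z, hz, hze⟩ := hy
  rw [chi, prod_idx]
  refine Finset.prod_eq_one fun i _ => Finset.prod_eq_one fun j _ => ?_
  rcases hv i j with h1 | h1
  · exact Finset.prod_eq_one fun c _ => by rw [h1 c, ZMod.val_zero, pow_zero]
  · have hval : ((r : ZMod n)).val = r := ZMod.val_cast_of_lt (by omega)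
    have step1 : ∀ c : Fin (kf i), y ⟨i, (j, c)⟩ ^ (v ⟨i, (j, c)⟩).val
        = y ⟨i, (j, c)⟩ ^ r := fun c => by rw [h1 c, hval]
    rw [Finset.prod_congr rfl fun c _ => step1 c, Finset.prod_pow]
    have hblock : ∏ c : Fin (kf i), y ⟨i, (j, c)⟩
        = (∏ c : Fin (kf i), z ⟨i, (j, c)⟩) ^ 2 := by
      rw [Finset.prod_congr rfl fun c (_ : c ∈ Finset.univ) => hze ⟨i, (j, c)⟩,
        Finset.prod_mul_distrib]
      rw [sq]
      congr 1
      exact Equiv.prod_comp (finRotate (kf i)) (fun c => z ⟨i, (j, c)⟩)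
    rw [hblock, ← pow_mul]
    have : (∏ c : Fin (kf i), z ⟨i, (j, c)⟩) ≠ 0 :=
      Finset.prod_ne_zero_iff.2 fun c _ => hz _
    rw [show 2 * r = n from hn.symm]
    exact hpow _ this
end chars

section converse
variable {l : ℕ} {kf mf : Fin l → ℕ} {K : Type} [Field K]

lemma finRotate_ne_self {k : ℕ} (hk2 : 2 ≤ k) (c : Fin k) : finRotate k c ≠ c := by
  obtain ⟨m, rfl⟩ : ∃ m, k = m + 2 := ⟨k - 2, by omega⟩
  rw [finRotate_succ_apply]
  intro hcon
  have h1 : (1 : Fin (m + 2)) = 0 := add_left_cancel (hcon.trans (add_zero c).symm)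
  exact one_ne_zero h1

lemma idx_mk_eq_iff {i : Fin l} {j j' : Fin (mf i)} {c c' : Fin (kf i)} :
    (⟨i, (j, c)⟩ : Idx l kf mf) = ⟨i, (j', c')⟩ ↔ j = j' ∧ c = c' := by
  constructor
  · intro hcc
    have h2 := (Sigma.mk.inj_iff.1 hcc).2
    rw [heq_eq_eq, Prod.mk.injEq] at h2
    exact h2
  · rintro ⟨rfl, rfl⟩; rfl

lemma gen_relation {n : ℕ} [NeZero n]
    {g : K} (hgne : g ≠ 0) (hgord : ∀ m : ℕ, g ^ m = 1 ↔ n ∣ m)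
    {u : Idx l kf mf → ZMod n}
    (h : ∀ y ∈ unionCyclesToricSet K l kf mf, chi n u y = 1)
    {i : Fin l} (hk2 : 2 ≤ kf i) (j : Fin (mf i)) (c₀ : Fin (kf i)) :
    u ⟨i, (j, c₀)⟩ + u ⟨i, (j, (finRotate (kf i)).symm c₀)⟩ = 0 := by
  classical
  set c₁ : Fin (kf i) := (finRotate (kf i)).symm c₀ with hc₁
  have hc01 : c₁ ≠ c₀ := by
    intro hcon
    have h2 := congrArg (finRotate (kf i)) hcon
    rw [hc₁, Equiv.apply_symm_apply] at h2
    exact finRotate_ne_self hk2 c₀ h2.symm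
  set P₀ : Idx l kf mf := ⟨i, (j, c₀)⟩ with hP₀
  set P₁ : Idx l kf mf := ⟨i, (j, c₁)⟩ with hP₁
  have hP01 : P₀ ≠ P₁ := by
    rw [hP₀, hP₁, ne_eq, idx_mk_eq_iff]
    rintro ⟨-, hcon⟩
    exact hc01 hcon.symm
  set z : Idx l kf mf → K := fun p => if p = P₀ then g else 1 with hz
  set y : Idx l kf mf → K :=
    fun p => z p * z ⟨p.1, (p.2.1, finRotate (kf p.1) p.2.2)⟩ with hy
  have hyX : y ∈ unionCyclesToricSet K l kf mf :=
    ⟨z, fun p => by dsimp only [z]; split <;> simp [hgne], fun p => rfl⟩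
  have hchi := h y hyX
  have hyP₀ : y P₀ = g := by
    have h2 : (⟨i, (j, finRotate (kf i) c₀)⟩ : Idx l kf mf) ≠ P₀ := by
      rw [hP₀, ne_eq, idx_mk_eq_iff]
      rintro ⟨-, hcon⟩
      exact finRotate_ne_self hk2 c₀ hcon
    rw [hy]
    dsimp only
    rw [hz]
    dsimp only
    rw [if_pos rfl, if_neg h2, mul_one]
  have hyP₁ : y P₁ = g := by
    have h2 : (⟨i, (j, finRotate (kf i) c₁)⟩ : Idx l kf mf) = P₀ := by
      rw [hP₀, idx_mk_eq_iff, hc₁, Equiv.apply_symm_apply]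
      exact ⟨rfl, rfl⟩
    rw [hy]
    dsimp only
    rw [h2, hz]
    dsimp only
    rw [if_neg hP01.symm, if_pos rfl, one_mul]
  have hyother : ∀ p : Idx l kf mf, p ≠ P₀ → p ≠ P₁ → y p = 1 := by
    rintro ⟨pi, pj, pc⟩ hp0 hp1
    have hz1 : z ⟨pi, (pj, pc)⟩ = 1 := if_neg hp0
    have hz2 : z ⟨pi, (pj, finRotate (kf pi) pc)⟩ = 1 := by
      rw [hz]
      dsimp only
      rw [if_neg]
      intro hcon
      rw [hP₀] at hcon
      obtain ⟨h1, h2⟩ := Sigma.mk.inj_iff.1 hcon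
      subst h1
      rw [heq_eq_eq, Prod.mk.injEq] at h2
      obtain ⟨rfl, h3⟩ := h2
      apply hp1
      rw [hP₁, idx_mk_eq_iff, hc₁]
      exact ⟨rfl, by rw [← h3, Equiv.symm_apply_apply]⟩
    rw [hy]
    dsimp only
    rw [hz1, hz2, mul_one]
  have hexp : chi n u y = g ^ ((u P₀).val + (u P₁).val) := by
    rw [chi]
    rw [← Finset.prod_subset (Finset.subset_univ ({P₀, P₁} : Finset (Idx l kf mf)))
      (fun p _ hp => ?_)]
    · rw [Finset.prod_pair hP01, hyP₀, hyP₁, pow_add]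
    · simp only [Finset.mem_insert, Finset.mem_singleton, not_or] at hp
      rw [hyother p hp.1 hp.2, one_pow]
  rw [hexp] at hchi
  have hdvd := (hgord _).1 hchi
  have hcast : (((u P₀).val + (u P₁).val : ℕ) : ZMod n) = 0 :=
    (ZMod.natCast_eq_zero_iff _ _).2 hdvd
  rwa [Nat.cast_add, ZMod.natCast_val, ZMod.natCast_val, ZMod.cast_id, ZMod.cast_id] at hcast

lemma chi_trivial_mem_lam {n r : ℕ} (hn : n = 2 * r) (hr : 1 ≤ r) [NeZero n]
    (γf : Fin l → ℕ) (hγ : ∀ i, 1 ≤ γf i) (hk : ∀ i, kf i = 2 * γf i + 1)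
    {g : K} (hgne : g ≠ 0) (hgord : ∀ m : ℕ, g ^ m = 1 ↔ n ∣ m)
    {u : Idx l kf mf → ZMod n}
    (h : ∀ y ∈ unionCyclesToricSet K l kf mf, chi n u y = 1) :
    u ∈ Lam l kf mf n r hn := by
  intro i j
  have hk2 : 2 ≤ kf i := by have := hγ i; rw [hk i]; omega
  have hrel : ∀ c : Fin (kf i),
      (fun c => u ⟨i, (j, c)⟩) (finRotate (kf i) c) = - (fun c => u ⟨i, (j, c)⟩) c := by
    intro c
    have h0 := gen_relation hgne hgord h hk2 j (finRotate (kf i) c)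
    rw [Equiv.symm_apply_apply] at h0
    exact eq_neg_of_add_eq_zero_left h0
  exact block_alternating hn hr (hk i) (fun c => u ⟨i, (j, c)⟩) hrel

end converse

section quotient
variable (l : ℕ) (kf mf : Fin l → ℕ) (K : Type) [Field K]

abbrev Qt (n r : ℕ) (hn : n = 2 * r) : Type :=
  (Idx l kf mf → ZMod n) ⧸ Lam l kf mf n r hn

def degV {n : ℕ} (v : Idx l kf mf → ZMod n) : ℕ := ∑ p, (v p).val

noncomputable instance (n r : ℕ) (hn : n = 2 * r) [NeZero n] : Fintype (Qt l kf mf n r hn) :=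
  Fintype.ofFinite _

noncomputable def Dmin {n r : ℕ} {hn : n = 2 * r} (c : Qt l kf mf n r hn) : ℕ :=
  sInf (degV l kf mf '' {v | (QuotientAddGroup.mk v : Qt l kf mf n r hn) = c})

variable {l kf mf K}

lemma Dmin_le {n r : ℕ} {hn : n = 2 * r} {c : Qt l kf mf n r hn}
    {v : Idx l kf mf → ZMod n} (hv : (QuotientAddGroup.mk v : Qt l kf mf n r hn) = c) :
    Dmin l kf mf c ≤ degV l kf mf v :=
  Nat.sInf_le ⟨v, hv, rfl⟩

lemma Dmin_exists {n r : ℕ} {hn : n = 2 * r} (c : Qt l kf mf n r hn) :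
    ∃ v, (QuotientAddGroup.mk v : Qt l kf mf n r hn) = c ∧ degV l kf mf v = Dmin l kf mf c := by
  obtain ⟨v, hv⟩ := Quotient.exists_rep c
  have hne : (degV l kf mf '' {w | (QuotientAddGroup.mk w : Qt l kf mf n r hn) = c}).Nonempty :=
    ⟨degV l kf mf v, v, hv, rfl⟩
  obtain ⟨w, hw, hdw⟩ := Nat.sInf_mem hne
  exact ⟨w, hw, by rw [Dmin]; exact hdw⟩

/-- The character of `X` attached to an exponent vector, as a function on the subtype. -/
def chiX (n : ℕ) (v : Idx l kf mf → ZMod n) :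
    ↥(unionCyclesToricSet K l kf mf) → K := fun x => chi n v (x : Idx l kf mf → K)

lemma chiX_eq_of_rel {n r : ℕ} (hn : n = 2 * r) (hr : 1 ≤ r) [NeZero n]
    (hpow : ∀ x : K, x ≠ 0 → x ^ n = 1)
    {v w : Idx l kf mf → ZMod n} (hvw : -v + w ∈ Lam l kf mf n r hn) :
    chiX (K := K) n v = chiX (K := K) n w := by
  funext x
  have hw : w = v + (-v + w) := by abel
  rw [chiX, chiX, hw, chi_add hpow, chi_lam hn hr hpow hvw x.2, mul_one]
  exact fun p => mem_toric_ne_zero x.2 p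

noncomputable def chiQX {n r : ℕ} (hn : n = 2 * r) (hr : 1 ≤ r) [NeZero n]
    (hpow : ∀ x : K, x ≠ 0 → x ^ n = 1) (c : Qt l kf mf n r hn) :
    ↥(unionCyclesToricSet K l kf mf) → K :=
  Quotient.liftOn c (chiX n) fun v w h =>
    chiX_eq_of_rel hn hr hpow (QuotientAddGroup.leftRel_apply.1 h)

lemma chiQX_mk {n r : ℕ} (hn : n = 2 * r) (hr : 1 ≤ r) [NeZero n]
    (hpow : ∀ x : K, x ≠ 0 → x ^ n = 1) (v : Idx l kf mf → ZMod n) :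
    chiQX hn hr hpow (QuotientAddGroup.mk v : Qt l kf mf n r hn) = chiX n v := rfl

lemma chiQX_injective {n r : ℕ} (hn : n = 2 * r) (hr : 1 ≤ r) [NeZero n]
    (hpow : ∀ x : K, x ≠ 0 → x ^ n = 1)
    (γf : Fin l → ℕ) (hγ : ∀ i, 1 ≤ γf i) (hk : ∀ i, kf i = 2 * γf i + 1)
    {g : K} (hgne : g ≠ 0) (hgord : ∀ m : ℕ, g ^ m = 1 ↔ n ∣ m) :
    Function.Injective (chiQX (K := K) hn hr hpow (l := l) (kf := kf) (mf := mf)) := by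
  intro c c' hcc
  obtain ⟨v, rfl⟩ := Quotient.exists_rep c
  obtain ⟨w, rfl⟩ := Quotient.exists_rep c'
  rw [show (Quotient.mk _ v : Qt l kf mf n r hn) = QuotientAddGroup.mk v from rfl,
    show (Quotient.mk _ w : Qt l kf mf n r hn) = QuotientAddGroup.mk w from rfl] at hcc ⊢
  rw [chiQX_mk, chiQX_mk] at hcc
  rw [QuotientAddGroup.eq]
  refine chi_trivial_mem_lam hn hr γf hγ hk hgne hgord fun y hy => ?_
  have h1 : chi n v y = chi n w y := congrFun hcc ⟨y, hy⟩
  have h2 : chi n w y = chi n v y * chi n (-v + w) y := by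
    rw [← chi_add hpow _ _ _ (fun p => mem_toric_ne_zero hy p)]
    congr 1
    abel
  have h3 : chi n (-v + w) y = 1 :=
    (mul_left_cancel₀ (chi_ne_zero v y fun p => mem_toric_ne_zero hy p)
      (by rw [mul_one]; exact h1.trans h2)).symm
  exact h3

end quotient

section indep
variable {l : ℕ} {kf mf : Fin l → ℕ} {K : Type} [Field K]

def chiHom (n : ℕ) (v : Idx l kf mf → ZMod n) : ↥(Xm l kf mf K) →* K where
  toFun x := chi n v (x : Idx l kf mf → K)
  map_one' := chi_one n v
  map_mul' x y := chi_mul n v (x : Idx l kf mf → K) (y : Idx l kf mf → K)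

lemma chiQX_linearIndependent {n r : ℕ} (hn : n = 2 * r) (hr : 1 ≤ r) [NeZero n]
    (hpow : ∀ x : K, x ≠ 0 → x ^ n = 1)
    (γf : Fin l → ℕ) (hγ : ∀ i, 1 ≤ γf i) (hk : ∀ i, kf i = 2 * γf i + 1)
    {g : K} (hgne : g ≠ 0) (hgord : ∀ m : ℕ, g ^ m = 1 ↔ n ∣ m) :
    LinearIndependent K (chiQX (K := K) hn hr hpow (l := l) (kf := kf) (mf := mf)) := by
  set F : Qt l kf mf n r hn → (↥(Xm l kf mf K) →* K) :=
    Quotient.lift (chiHom n) (fun v w h => DFunLike.ext _ _ fun x =>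
      congrFun (chiX_eq_of_rel hn hr hpow (QuotientAddGroup.leftRel_apply.1 h)) x) with hF
  have hcoe : ∀ c, (⇑(F c) : ↥(unionCyclesToricSet K l kf mf) → K) = chiQX hn hr hpow c := by
    intro c
    obtain ⟨v, rfl⟩ := Quotient.exists_rep c
    rfl
  have hFinj : Function.Injective F := by
    intro c c' hcc
    apply chiQX_injective hn hr hpow γf hγ hk hgne hgord
    rw [← hcoe c, ← hcoe c', hcc]
  have hLI := (linearIndependent_monoidHom (↥(Xm l kf mf K)) K).comp F hFinj
  have : (fun c => (⇑(F c) : ↥(unionCyclesToricSet K l kf mf) → K))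
      = chiQX (K := K) hn hr hpow := funext hcoe
  rw [← this]
  exact hLI

lemma evalFuns_monomial_eq_chiX {n : ℕ} [NeZero n]
    (hpow : ∀ x : K, x ≠ 0 → x ^ n = 1) (a : Idx l kf mf →₀ ℕ) :
    evalFuns (unionCyclesToricSet K l kf mf) (monomial a (1 : K))
      = chiX n (fun p => ((a p : ℕ) : ZMod n)) := by
  funext x
  show eval (x : Idx l kf mf → K) (monomial a 1) = _
  rw [eval_monomial, one_mul, chiX, chi]
  rw [Finsupp.prod_fintype _ _ (fun p => pow_zero _)]
  refine Finset.prod_congr rfl fun p _ => ?_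
  refine pow_congr_mod hpow (mem_toric_ne_zero x.2 p) ?_
  rw [ZMod.val_natCast]
  exact (Nat.mod_mod_of_dvd _ dvd_rfl).symm

lemma image_monomials_eq {n r : ℕ} (hn : n = 2 * r) (hr : 1 ≤ r) [NeZero n]
    (hpow : ∀ x : K, x ≠ 0 → x ^ n = 1) (d : ℕ) :
    (fun a : Idx l kf mf →₀ ℕ =>
        evalFuns (unionCyclesToricSet K l kf mf) (monomial a (1 : K))) ''
        {a : Idx l kf mf →₀ ℕ | (a.sum fun _ e => e) ≤ d}
      = chiQX (K := K) hn hr hpow '' {c | Dmin l kf mf c ≤ d} := by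
  ext f
  constructor
  · rintro ⟨a, ha, rfl⟩
    refine ⟨QuotientAddGroup.mk (fun p => ((a p : ℕ) : ZMod n)), ?_, ?_⟩
    · refine le_trans (Dmin_le rfl) (le_trans ?_ ha)
      rw [degV, Finsupp.sum_fintype _ _ (fun p => rfl)]
      exact Finset.sum_le_sum fun p _ => by
        rw [ZMod.val_natCast]; exact Nat.mod_le _ _
    · rw [chiQX_mk]; exact (evalFuns_monomial_eq_chiX hpow a).symm
  · rintro ⟨c, hc, rfl⟩
    obtain ⟨v, hv, hdv⟩ := Dmin_exists c
    refine ⟨Finsupp.equivFunOnFinite.symm (fun p => (v p).val), ?_, ?_⟩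
    · rw [Set.mem_setOf_eq, Finsupp.sum_fintype _ _ (fun p => rfl)]
      have heq : ∀ p, (Finsupp.equivFunOnFinite.symm (fun p => (v p).val)) p = (v p).val :=
        fun p => rfl
      rw [Finset.sum_congr rfl fun p _ => heq p]
      rw [show ∑ p, (v p).val = degV l kf mf v from rfl, hdv]
      exact hc
    · show evalFuns (unionCyclesToricSet K l kf mf)
          (monomial (Finsupp.equivFunOnFinite.symm fun p => (v p).val) (1 : K)) = _
      rw [evalFuns_monomial_eq_chiX hpow, ← hv, chiQX_mk]
      refine congrArg (chiX n) ?_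
      funext p
      rw [show (Finsupp.equivFunOnFinite.symm (fun p => (v p).val)) p = (v p).val from rfl]
      exact ZMod.natCast_rightInverse (v p)

set_option maxHeartbeats 1000000 in
lemma affineHilbert_eq_card {n r : ℕ} (hn : n = 2 * r) (hr : 1 ≤ r) [NeZero n]
    (hpow : ∀ x : K, x ≠ 0 → x ^ n = 1)
    (γf : Fin l → ℕ) (hγ : ∀ i, 1 ≤ γf i) (hk : ∀ i, kf i = 2 * γf i + 1)
    {g : K} (hgne : g ≠ 0) (hgord : ∀ m : ℕ, g ^ m = 1 ↔ n ∣ m) (d : ℕ) :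
    affineHilbertFunction K (unionCyclesToricSet K l kf mf) d
      = (Finset.univ.filter
          (fun c : Qt l kf mf n r hn => Dmin l kf mf c ≤ d)).card := by
  rw [affineHilbertFunction_eq_finrank_range, range_eval_eq_span]
  rw [show (fun a : Idx l kf mf →₀ ℕ =>
      evalFuns (unionCyclesToricSet K l kf mf) (monomial a (1:K))) ''
      {a : Idx l kf mf →₀ ℕ | (a.sum fun _ e => e) ≤ d}
      = chiQX (K := K) hn hr hpow '' {c | Dmin l kf mf c ≤ d} from
    image_monomials_eq hn hr hpow d]
  have hLI2 := (chiQX_linearIndependent hn hr hpow γf hγ hk hgne hgord).comp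
      (Subtype.val : ↥{c : Qt l kf mf n r hn | Dmin l kf mf c ≤ d} → Qt l kf mf n r hn)
      Subtype.val_injective
  have himg : chiQX (K := K) hn hr hpow '' {c | Dmin l kf mf c ≤ d}
      = Set.range (chiQX (K := K) hn hr hpow ∘
          (Subtype.val : ↥{c : Qt l kf mf n r hn | Dmin l kf mf c ≤ d} → Qt l kf mf n r hn)) := by
    rw [Set.range_comp, Subtype.range_val]
  rw [himg, finrank_span_eq_card hLI2]
  rw [← Set.toFinset_card, Set.toFinset_setOf]

end indep

section bounds
variable {l : ℕ} {kf mf : Fin l → ℕ}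

lemma degV_eq_sum_blocks {n : ℕ} (v : Idx l kf mf → ZMod n) :
    degV l kf mf v
      = ∑ i : Fin l, ∑ j : Fin (mf i), ∑ c : Fin (kf i), (v ⟨i, (j, c)⟩).val := by
  rw [degV, ← Finset.univ_sigma_univ, Finset.sum_sigma]
  exact Finset.sum_congr rfl fun i _ => Fintype.sum_prod_type _

lemma Dmin_le_P {n r : ℕ} (hn : n = 2 * r) (hr : 1 ≤ r) [NeZero n]
    (γf : Fin l → ℕ) (hk : ∀ i, kf i = 2 * γf i + 1) (c : Qt l kf mf n r hn) :
    Dmin l kf mf c ≤ ∑ i : Fin l, mf i * ((kf i + γf i) * r - kf i) := by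
  classical
  obtain ⟨v, rfl⟩ := Quotient.exists_rep c
  rw [show (Quotient.mk _ v : Qt l kf mf n r hn) = QuotientAddGroup.mk v from rfl]
  set u : Idx l kf mf → ZMod n := fun p =>
    if (∑ c : Fin (kf p.1), (v ⟨p.1, (p.2.1, c)⟩).val) ≤ (kf p.1 + γf p.1) * r - kf p.1
    then 0 else (r : ZMod n) with hu
  have hulam : u ∈ Lam l kf mf n r hn := by
    intro i j
    by_cases hcond :
        (∑ c : Fin (kf i), (v ⟨i, (j, c)⟩).val) ≤ (kf i + γf i) * r - kf i
    · exact Or.inl fun c => if_pos hcond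
    · exact Or.inr fun c => if_neg hcond
  have hmk : (QuotientAddGroup.mk (v + u) : Qt l kf mf n r hn) = QuotientAddGroup.mk v := by
    rw [QuotientAddGroup.eq]
    have he : -(v + u) + v = -u := by abel
    rw [he]
    exact neg_mem hulam
  refine le_trans (Dmin_le hmk) ?_
  rw [degV_eq_sum_blocks]
  have hblock : ∀ (i : Fin l) (j : Fin (mf i)),
      ∑ c : Fin (kf i), ((v + u) ⟨i, (j, c)⟩).val ≤ (kf i + γf i) * r - kf i := by
    intro i j
    by_cases hcond :
        (∑ c : Fin (kf i), (v ⟨i, (j, c)⟩).val) ≤ (kf i + γf i) * r - kf i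
    · have : ∀ c : Fin (kf i), ((v + u) ⟨i, (j, c)⟩).val = (v ⟨i, (j, c)⟩).val := by
        intro c
        rw [Pi.add_apply, show u ⟨i, (j, c)⟩ = 0 from if_pos hcond, add_zero]
      rw [Finset.sum_congr rfl fun c _ => this c]
      exact hcond
    · have : ∀ c : Fin (kf i), ((v + u) ⟨i, (j, c)⟩).val
          = (v ⟨i, (j, c)⟩ + (r : ZMod n)).val := by
        intro c
        rw [Pi.add_apply, show u ⟨i, (j, c)⟩ = (r : ZMod n) from if_neg hcond]
      rw [Finset.sum_congr rfl fun c _ => this c]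
      rcases block_min_le hn hr (hk i) (fun c => v ⟨i, (j, c)⟩) with h1 | h1
      · exact absurd h1 hcond
      · exact h1
  calc ∑ i : Fin l, ∑ j : Fin (mf i), ∑ c : Fin (kf i), ((v + u) ⟨i, (j, c)⟩).val
      ≤ ∑ i : Fin l, ∑ _j : Fin (mf i), ((kf i + γf i) * r - kf i) :=
        Finset.sum_le_sum fun i _ => Finset.sum_le_sum fun j _ => hblock i j
    _ = ∑ i : Fin l, mf i * ((kf i + γf i) * r - kf i) := by
        refine Finset.sum_congr rfl fun i _ => ?_
        rw [Finset.sum_const, Finset.card_univ, Fintype.card_fin, smul_eq_mul]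

def vstar {γf : Fin l → ℕ} (n r : ℕ) (hk : ∀ i, kf i = 2 * γf i + 1) :
    Idx l kf mf → ZMod n :=
  fun p => extremalBlock (n := n) r (γf p.1) (hk p.1) p.2.2

lemma P_le_Dmin_vstar {n r : ℕ} (hn : n = 2 * r) (hr : 1 ≤ r) [NeZero n]
    (γf : Fin l → ℕ) (hk : ∀ i, kf i = 2 * γf i + 1) :
    (∑ i : Fin l, mf i * ((kf i + γf i) * r - kf i))
      ≤ Dmin l kf mf (QuotientAddGroup.mk (vstar (mf := mf) n r hk) : Qt l kf mf n r hn) := by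
  refine le_csInf ⟨degV l kf mf (vstar (mf := mf) n r hk), vstar (mf := mf) n r hk, rfl, rfl⟩ ?_
  rintro m ⟨w, hw, rfl⟩
  have hlam : -w + vstar (mf := mf) n r hk ∈ Lam l kf mf n r hn := QuotientAddGroup.eq.1 hw
  have hlam' : -(-w + vstar (mf := mf) n r hk) ∈ Lam l kf mf n r hn := neg_mem hlam
  have hwe : w = vstar (mf := mf) n r hk + -(-w + vstar (mf := mf) n r hk) := by abel
  rw [hwe, degV_eq_sum_blocks]
  set u := -(-w + vstar (mf := mf) n r hk) with hu
  have hblock : ∀ (i : Fin l) (j : Fin (mf i)),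
      (kf i + γf i) * r - kf i
        ≤ ∑ c : Fin (kf i), ((vstar (mf := mf) n r hk + u) ⟨i, (j, c)⟩).val := by
    intro i j
    rcases hlam' i j with h0 | h1
    · have he : ∀ c : Fin (kf i), ((vstar (mf := mf) n r hk + u) ⟨i, (j, c)⟩).val
          = ((extremalBlock (n := n) r (γf i) (hk i)) c).val := by
        intro c
        rw [Pi.add_apply, h0 c, add_zero]
        rfl
      rw [Finset.sum_congr rfl fun c _ => he c, extremalBlock_sum hn hr (hk i)]
    · have he : ∀ c : Fin (kf i), ((vstar (mf := mf) n r hk + u) ⟨i, (j, c)⟩).val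
          = ((extremalBlock (n := n) r (γf i) (hk i)) c + (r : ZMod n)).val := by
        intro c
        rw [Pi.add_apply, h1 c]
        rfl
      rw [Finset.sum_congr rfl fun c _ => he c, extremalBlock_flip_sum hn hr (hk i)]
      omega
  calc ∑ i : Fin l, mf i * ((kf i + γf i) * r - kf i)
      = ∑ i : Fin l, ∑ _j : Fin (mf i), ((kf i + γf i) * r - kf i) := by
        refine Finset.sum_congr rfl fun i _ => ?_
        rw [Finset.sum_const, Finset.card_univ, Fintype.card_fin, smul_eq_mul]
    _ ≤ _ := Finset.sum_le_sum fun i _ => Finset.sum_le_sum fun j _ => hblock i j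

end bounds

/-- Let `𝒢 = 𝒢₁ ∪ ⋯ ∪ 𝒢_l`, where `𝒢_i` has `mf i` connected components,
each an odd cycle of length `kf i = 2·γf i + 1`. The regularity index of `I(X*_𝒢)` — the
least `p ≥ 0` such that `H_{X*_𝒢}(d) = |X*_𝒢|` for all `d ≥ p` — equals
`Σ_{i=1}^{l} (mf i · (kf i + γf i) · (q−1)/2 − kf i · mf i)`. -/
theorem regularity_unionCyclesToricSet (q l : ℕ) (kf mf γf : Fin l → ℕ)
    (hγ : ∀ i, 1 ≤ γf i) (hk : ∀ i, kf i = 2 * γf i + 1) (hm : ∀ i, 1 ≤ mf i)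
    (K : Type) [Field K] [Fintype K] (hq : Fintype.card K = q) (hq2 : 2 ∣ q - 1) :
    IsLeast {p : ℕ | ∀ d : ℕ, p ≤ d →
        affineHilbertFunction K (unionCyclesToricSet K l kf mf) d =
          (unionCyclesToricSet K l kf mf).ncard}
      (∑ i : Fin l, (mf i * (kf i + γf i) * ((q - 1) / 2) - kf i * mf i)) := by
  classical
  obtain ⟨r, hr2⟩ := hq2
  have hq2' : 2 ≤ q := by
    rw [← hq]
    exact Fintype.one_lt_card
  have hr : 1 ≤ r := by omega
  haveI : NeZero (q - 1) := ⟨by omega⟩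
  set X : Set (Idx l kf mf → K) := unionCyclesToricSet K l kf mf with hX
  have hpow : ∀ x : K, x ≠ 0 → x ^ (q - 1) = 1 := by
    intro x hx
    rw [← hq]
    exact FiniteField.pow_card_sub_one_eq_one x hx
  -- generator of Kˣ
  obtain ⟨gu, hgu⟩ := IsCyclic.exists_generator (α := Kˣ)
  have horder : orderOf gu = q - 1 := by
    rw [orderOf_eq_card_of_forall_mem_zpowers hgu, Nat.card_eq_fintype_card, Fintype.card_units, hq]
  have hgne : (gu : K) ≠ 0 := Units.ne_zero gu
  have hgord : ∀ m : ℕ, (gu : K) ^ m = 1 ↔ (q - 1) ∣ m := by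
    intro m
    rw [← Units.val_pow_eq_pow_val, Units.val_eq_one, ← horder]
    exact (orderOf_dvd_iff_pow_eq_one).symm
  -- Hilbert function formula
  have hH : ∀ d : ℕ, affineHilbertFunction K X d
      = (Finset.univ.filter
          (fun c : Qt l kf mf (q - 1) r hr2 => Dmin l kf mf c ≤ d)).card :=
    fun d => affineHilbert_eq_card hr2 hr hpow γf hγ hk hgne hgord d
  have hXfin : X.Finite := Set.toFinite _
  haveI : Fintype ↥X := hXfin.fintype
  set P : ℕ := ∑ i : Fin l, mf i * ((kf i + γf i) * r - kf i) with hP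
  obtain ⟨d₀, hd₀⟩ := exists_range_evalFuns_top X hXfin
  have hcardQ : Fintype.card (Qt l kf mf (q - 1) r hr2) = X.ncard := by
    set d₁ := max d₀ P with hd₁
    have h1 : affineHilbertFunction K X d₁ = X.ncard := by
      rw [affineHilbertFunction_eq_finrank_range, hd₀ d₁ (le_max_left _ _), finrank_top,
        Module.finrank_pi, ← Nat.card_eq_fintype_card, Nat.card_coe_set_eq]
    have h2 : affineHilbertFunction K X d₁ = Fintype.card (Qt l kf mf (q - 1) r hr2) := by
      rw [hH d₁, Finset.filter_true_of_mem, Finset.card_univ]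
      intro c _
      exact le_trans (Dmin_le_P hr2 hr γf hk c) (le_max_right _ _)
    rw [← h2, h1]
  have hiff : ∀ d : ℕ, affineHilbertFunction K X d = X.ncard ↔
      (∀ c : Qt l kf mf (q - 1) r hr2, Dmin l kf mf c ≤ d) := by
    intro d
    rw [hH d, ← hcardQ]
    constructor
    · intro h c
      have huniv := Finset.eq_univ_of_card _ h
      have hmem := huniv ▸ Finset.mem_univ c
      exact (Finset.mem_filter.1 hmem).2
    · intro h
      rw [Finset.filter_true_of_mem (fun c _ => h c), Finset.card_univ]
  have hdiv : (q - 1) / 2 = r := by omega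
  have hFP : (∑ i : Fin l, (mf i * (kf i + γf i) * ((q - 1) / 2) - kf i * mf i)) = P := by
    rw [hP]
    refine Finset.sum_congr rfl fun i _ => ?_
    rw [Nat.mul_sub]
    have h1 : mf i * ((kf i + γf i) * r) = mf i * (kf i + γf i) * ((q - 1) / 2) := by
      rw [hdiv]; ring
    have h2 : mf i * kf i = kf i * mf i := mul_comm _ _
    rw [h1, h2]
  rw [hFP]
  constructor
  · intro d hd
    exact (hiff d).2 fun c => le_trans (Dmin_le_P hr2 hr γf hk c) hd
  · intro p hp
    have h1 := (hiff p).1 (hp p (le_refl p))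
    exact le_trans (le_trans (P_le_Dmin_vstar hr2 hr γf hk)
      (h1 (QuotientAddGroup.mk (vstar (mf := mf) (q - 1) r hk)))) (le_refl p)
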